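/- arXiv:2501.12251 — 15 statements merged into one kernel-verified Lean document; each statement's English description precedes it below -/
import Mathlib

section
/- If θ = ⟨(μ_θ, ν_θ); r_θ⟩ and κ = ⟨(μ_κ, ν_κ); r_κ⟩ are D-IFVs, then θ ⊕_q κ := ⟨(1−(1−μ_θ)(1−μ_κ), ν_θ·ν_κ); r_θ·r_κ/√2⟩ is again a D-IFV; explicitly, 1−(1−μ_θ)(1−μ_κ) ∈ [0,1], ν_θ·ν_κ ∈ [0,1], (1−(1−μ_θ)(1−μ_κ)) + ν_θ·ν_κ ≤ 1, and r_θ·r_κ/√2 ∈ [0,√2]. -/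
/-- If θ and κ are D-IFVs, then θ ⊕_q κ is again a D-IFV. -/
theorem dIFV_oplus_q (μθ νθ rθ μκ νκ rκ : ℝ)
    (hμθ : μθ ∈ Set.Icc (0:ℝ) 1) (hνθ : νθ ∈ Set.Icc (0:ℝ) 1) (hθ : μθ + νθ ≤ 1)
    (hrθ : rθ ∈ Set.Icc (0:ℝ) (Real.sqrt 2))
    (hμκ : μκ ∈ Set.Icc (0:ℝ) 1) (hνκ : νκ ∈ Set.Icc (0:ℝ) 1) (hκ : μκ + νκ ≤ 1)
    (hrκ : rκ ∈ Set.Icc (0:ℝ) (Real.sqrt 2)) :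
    (1 - (1 - μθ) * (1 - μκ)) ∈ Set.Icc (0:ℝ) 1 ∧
    νθ * νκ ∈ Set.Icc (0:ℝ) 1 ∧
    (1 - (1 - μθ) * (1 - μκ)) + νθ * νκ ≤ 1 ∧
    rθ * rκ / Real.sqrt 2 ∈ Set.Icc (0:ℝ) (Real.sqrt 2) := by
  obtain ⟨h1, h2⟩ := hμθ
  obtain ⟨h3, h4⟩ := hνθ
  obtain ⟨h5, h6⟩ := hrθ
  obtain ⟨h7, h8⟩ := hμκ
  obtain ⟨h9, h10⟩ := hνκ
  obtain ⟨h11, h12⟩ := hrκ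
  have hs : Real.sqrt 2 > 0 := by positivity
  have hsq : Real.sqrt 2 * Real.sqrt 2 = 2 := Real.mul_self_sqrt (by norm_num)
  refine ⟨⟨by nlinarith, by nlinarith⟩, ⟨by positivity, by nlinarith⟩, by nlinarith, ?_, ?_⟩
  · positivity
  · rw [div_le_iff₀ hs]
    nlinarith [mul_le_mul h6 h12 h11 (le_of_lt hs)]
end

section
/- If θ = ⟨(μ_θ, ν_θ); r_θ⟩ and κ = ⟨(μ_κ, ν_κ); r_κ⟩ are D-IFVs, then θ ⊕_p κ := ⟨(1−(1−μ_θ)(1−μ_κ), ν_θ·ν_κ); √2 − √2(1 − r_θ/√2)(1 − r_κ/√2)⟩ is again a D-IFV; explicitly, 1−(1−μ_θ)(1−μ_κ) ∈ [0,1], ν_θ·ν_κ ∈ [0,1], (1−(1−μ_θ)(1−μ_κ)) + ν_θ·ν_κ ≤ 1, and √2 − √2(1 − r_θ/√2)(1 − r_κ/√2) ∈ [0,√2]. -/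
/-- If θ and κ are D-IFVs, then θ ⊕_p κ is again a D-IFV. -/
theorem dIFV_oplus_p (μθ νθ rθ μκ νκ rκ : ℝ)
    (hμθ : μθ ∈ Set.Icc (0:ℝ) 1) (hνθ : νθ ∈ Set.Icc (0:ℝ) 1) (hθ : μθ + νθ ≤ 1)
    (hrθ : rθ ∈ Set.Icc (0:ℝ) (Real.sqrt 2))
    (hμκ : μκ ∈ Set.Icc (0:ℝ) 1) (hνκ : νκ ∈ Set.Icc (0:ℝ) 1) (hκ : μκ + νκ ≤ 1)
    (hrκ : rκ ∈ Set.Icc (0:ℝ) (Real.sqrt 2)) :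
    (1 - (1 - μθ) * (1 - μκ)) ∈ Set.Icc (0:ℝ) 1 ∧
    νθ * νκ ∈ Set.Icc (0:ℝ) 1 ∧
    (1 - (1 - μθ) * (1 - μκ)) + νθ * νκ ≤ 1 ∧
    (Real.sqrt 2 - Real.sqrt 2 * (1 - rθ / Real.sqrt 2) * (1 - rκ / Real.sqrt 2))
      ∈ Set.Icc (0:ℝ) (Real.sqrt 2) := by
  obtain ⟨h1, h2⟩ := hμθ
  obtain ⟨h3, h4⟩ := hνθ
  obtain ⟨h5, h6⟩ := hμκ
  obtain ⟨h7, h8⟩ := hνκ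
  obtain ⟨h9, h10⟩ := hrθ
  obtain ⟨h11, h12⟩ := hrκ
  have hs : (0:ℝ) < Real.sqrt 2 := by positivity
  have ha : rθ / Real.sqrt 2 ≤ 1 := by
    rw [div_le_one hs]; exact h10
  have hb : rκ / Real.sqrt 2 ≤ 1 := by
    rw [div_le_one hs]; exact h12
  have ha0 : 0 ≤ rθ / Real.sqrt 2 := by positivity
  have hb0 : 0 ≤ rκ / Real.sqrt 2 := by positivity
  refine ⟨⟨by nlinarith, by nlinarith⟩, ⟨by positivity, by nlinarith⟩, by nlinarith, ?_, ?_⟩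
  · have hp : (1 - rθ / Real.sqrt 2) * (1 - rκ / Real.sqrt 2) ≤ 1 := by nlinarith
    nlinarith [mul_le_of_le_one_right hs.le hp]
  · have hp0 : 0 ≤ (1 - rθ / Real.sqrt 2) * (1 - rκ / Real.sqrt 2) :=
      mul_nonneg (by linarith) (by linarith)
    nlinarith [mul_nonneg hs.le hp0]
end

section
/- If θ = ⟨(μ_θ, ν_θ); r_θ⟩ and κ = ⟨(μ_κ, ν_κ); r_κ⟩ are D-IFVs, then θ ⊗_p κ := ⟨(μ_θ·μ_κ, 1−(1−ν_θ)(1−ν_κ)); √2 − √2(1 − r_θ/√2)(1 − r_κ/√2)⟩ is again a D-IFV; explicitly, μ_θ·μ_κ ∈ [0,1], 1−(1−ν_θ)(1−ν_κ) ∈ [0,1], μ_θ·μ_κ + (1−(1−ν_θ)(1−ν_κ)) ≤ 1, and √2 − √2(1 − r_θ/√2)(1 − r_κ/√2) ∈ [0,√2]. -/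
/-- If θ and κ are D-IFVs, then θ ⊗_p κ is again a D-IFV. -/
theorem dIFV_otimes_p (μθ νθ rθ μκ νκ rκ : ℝ)
    (hμθ : μθ ∈ Set.Icc (0:ℝ) 1) (hνθ : νθ ∈ Set.Icc (0:ℝ) 1) (hθ : μθ + νθ ≤ 1)
    (hrθ : rθ ∈ Set.Icc (0:ℝ) (Real.sqrt 2))
    (hμκ : μκ ∈ Set.Icc (0:ℝ) 1) (hνκ : νκ ∈ Set.Icc (0:ℝ) 1) (hκ : μκ + νκ ≤ 1)
    (hrκ : rκ ∈ Set.Icc (0:ℝ) (Real.sqrt 2)) :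
    μθ * μκ ∈ Set.Icc (0:ℝ) 1 ∧
    (1 - (1 - νθ) * (1 - νκ)) ∈ Set.Icc (0:ℝ) 1 ∧
    μθ * μκ + (1 - (1 - νθ) * (1 - νκ)) ≤ 1 ∧
    (Real.sqrt 2 - Real.sqrt 2 * (1 - rθ / Real.sqrt 2) * (1 - rκ / Real.sqrt 2))
      ∈ Set.Icc (0:ℝ) (Real.sqrt 2) := by
  obtain ⟨h1, h2⟩ := hμθ
  obtain ⟨h3, h4⟩ := hνθ
  obtain ⟨h5, h6⟩ := hμκ
  obtain ⟨h7, h8⟩ := hνκ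
  obtain ⟨h9, h10⟩ := hrθ
  obtain ⟨h11, h12⟩ := hrκ
  have s2 : (0:ℝ) < Real.sqrt 2 := by positivity
  refine ⟨⟨by positivity, ?_⟩, ⟨by nlinarith, by nlinarith⟩, by nlinarith, ?_, ?_⟩
  · nlinarith
  · have ha : rθ / Real.sqrt 2 ≤ 1 := by
      rw [div_le_one s2]; exact h10
    have hb : rκ / Real.sqrt 2 ≤ 1 := by
      rw [div_le_one s2]; exact h12
    have hc : 0 ≤ rθ / Real.sqrt 2 := by positivity
    have hd : 0 ≤ rκ / Real.sqrt 2 := by positivity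
    have hP2 : (1 - rθ / Real.sqrt 2) * (1 - rκ / Real.sqrt 2) ≤ 1 := by nlinarith
    nlinarith [mul_le_mul_of_nonneg_left hP2 s2.le]
  · have ha : rθ / Real.sqrt 2 ≤ 1 := by rw [div_le_one s2]; exact h10
    have hb : rκ / Real.sqrt 2 ≤ 1 := by rw [div_le_one s2]; exact h12
    have hP1 : 0 ≤ (1 - rθ / Real.sqrt 2) * (1 - rκ / Real.sqrt 2) :=
      mul_nonneg (by linarith) (by linarith)
    nlinarith [mul_nonneg s2.le hP1]
end

section
/- If θ = ⟨(μ_θ, ν_θ); r_θ⟩ is a D-IFV and ζ > 0 is a real number, then ζ_q θ := ⟨(1−(1−μ_θ)^ζ, ν_θ^ζ); √2·(r_θ/√2)^ζ⟩ is again a D-IFV; explicitly, 1−(1−μ_θ)^ζ ∈ [0,1], ν_θ^ζ ∈ [0,1], (1−(1−μ_θ)^ζ) + ν_θ^ζ ≤ 1, and √2·(r_θ/√2)^ζ ∈ [0,√2]. -/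
/-- If θ is a D-IFV and ζ > 0, then ζ_q θ is again a D-IFV.
Real powers `x ^ ζ` are `Real.rpow`. -/
theorem dIFV_smul_q (μθ νθ rθ ζ : ℝ)
    (hμθ : μθ ∈ Set.Icc (0:ℝ) 1) (hνθ : νθ ∈ Set.Icc (0:ℝ) 1) (hθ : μθ + νθ ≤ 1)
    (hrθ : rθ ∈ Set.Icc (0:ℝ) (Real.sqrt 2)) (hζ : 0 < ζ) :
    (1 - (1 - μθ) ^ ζ) ∈ Set.Icc (0:ℝ) 1 ∧
    νθ ^ ζ ∈ Set.Icc (0:ℝ) 1 ∧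
    (1 - (1 - μθ) ^ ζ) + νθ ^ ζ ≤ 1 ∧
    Real.sqrt 2 * (rθ / Real.sqrt 2) ^ ζ ∈ Set.Icc (0:ℝ) (Real.sqrt 2) := by
  obtain ⟨hμ0, hμ1⟩ := hμθ
  obtain ⟨hν0, hν1⟩ := hνθ
  obtain ⟨hr0, hr1⟩ := hrθ
  have h1μ0 : (0:ℝ) ≤ 1 - μθ := by linarith
  have h1μ1 : 1 - μθ ≤ 1 := by linarith
  have hA1 : (1 - μθ) ^ ζ ≤ 1 := Real.rpow_le_one h1μ0 h1μ1 hζ.le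
  have hA0 : 0 ≤ (1 - μθ) ^ ζ := Real.rpow_nonneg h1μ0 ζ
  have hB1 : νθ ^ ζ ≤ 1 := Real.rpow_le_one hν0 hν1 hζ.le
  have hB0 : 0 ≤ νθ ^ ζ := Real.rpow_nonneg hν0 ζ
  have hsum : νθ ^ ζ ≤ (1 - μθ) ^ ζ :=
    Real.rpow_le_rpow hν0 (by linarith) hζ.le
  have hs2 : (0:ℝ) < Real.sqrt 2 := Real.sqrt_pos.mpr (by norm_num)
  have hq0 : 0 ≤ rθ / Real.sqrt 2 := div_nonneg hr0 hs2.le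
  have hq1 : rθ / Real.sqrt 2 ≤ 1 := (div_le_one hs2).mpr hr1
  have hC1 : (rθ / Real.sqrt 2) ^ ζ ≤ 1 := Real.rpow_le_one hq0 hq1 hζ.le
  have hC0 : 0 ≤ (rθ / Real.sqrt 2) ^ ζ := Real.rpow_nonneg hq0 ζ
  refine ⟨⟨by linarith, by linarith⟩, ⟨hB0, hB1⟩, by linarith, ⟨by positivity, ?_⟩⟩
  nlinarith
end

section
/- If θ = ⟨(μ_θ, ν_θ); r_θ⟩ is a D-IFV and ζ > 0 is a real number, then ζ_p θ := ⟨(1−(1−μ_θ)^ζ, ν_θ^ζ); √2 − √2(1 − r_θ/√2)^ζ⟩ is again a D-IFV; explicitly, 1−(1−μ_θ)^ζ ∈ [0,1], ν_θ^ζ ∈ [0,1], (1−(1−μ_θ)^ζ) + ν_θ^ζ ≤ 1, and √2 − √2(1 − r_θ/√2)^ζ ∈ [0,√2]. -/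
/-- If θ is a D-IFV and ζ > 0, then ζ_p θ is again a D-IFV.
Real powers `x ^ ζ` are `Real.rpow`. -/
theorem dIFV_smul_p (μθ νθ rθ ζ : ℝ)
    (hμθ : μθ ∈ Set.Icc (0:ℝ) 1) (hνθ : νθ ∈ Set.Icc (0:ℝ) 1) (hθ : μθ + νθ ≤ 1)
    (hrθ : rθ ∈ Set.Icc (0:ℝ) (Real.sqrt 2)) (hζ : 0 < ζ) :
    (1 - (1 - μθ) ^ ζ) ∈ Set.Icc (0:ℝ) 1 ∧
    νθ ^ ζ ∈ Set.Icc (0:ℝ) 1 ∧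
    (1 - (1 - μθ) ^ ζ) + νθ ^ ζ ≤ 1 ∧
    (Real.sqrt 2 - Real.sqrt 2 * (1 - rθ / Real.sqrt 2) ^ ζ)
      ∈ Set.Icc (0:ℝ) (Real.sqrt 2) := by
  obtain ⟨hμ0, hμ1⟩ := hμθ
  obtain ⟨hν0, hν1⟩ := hνθ
  obtain ⟨hr0, hr1⟩ := hrθ
  have hs2 : (0:ℝ) < Real.sqrt 2 := by positivity
  have h1μ0 : (0:ℝ) ≤ 1 - μθ := by linarith
  have h1μ1 : 1 - μθ ≤ 1 := by linarith
  have hA0 : (0:ℝ) ≤ (1 - μθ) ^ ζ := Real.rpow_nonneg h1μ0 ζ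
  have hA1 : (1 - μθ) ^ ζ ≤ 1 := Real.rpow_le_one h1μ0 h1μ1 hζ.le
  have hB0 : (0:ℝ) ≤ νθ ^ ζ := Real.rpow_nonneg hν0 ζ
  have hB1 : νθ ^ ζ ≤ 1 := Real.rpow_le_one hν0 hν1 hζ.le
  have hsum : νθ ^ ζ ≤ (1 - μθ) ^ ζ :=
    Real.rpow_le_rpow hν0 (by linarith) hζ.le
  have hq0 : (0:ℝ) ≤ 1 - rθ / Real.sqrt 2 := by
    have : rθ / Real.sqrt 2 ≤ 1 := (div_le_one hs2).mpr hr1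
    linarith
  have hq1 : 1 - rθ / Real.sqrt 2 ≤ 1 := by
    have : 0 ≤ rθ / Real.sqrt 2 := div_nonneg hr0 hs2.le
    linarith
  have hC0 : (0:ℝ) ≤ (1 - rθ / Real.sqrt 2) ^ ζ := Real.rpow_nonneg hq0 ζ
  have hC1 : (1 - rθ / Real.sqrt 2) ^ ζ ≤ 1 := Real.rpow_le_one hq0 hq1 hζ.le
  refine ⟨⟨by linarith, by linarith⟩, ⟨hB0, hB1⟩, by linarith, ⟨?_, ?_⟩⟩
  · nlinarith
  · nlinarith
end

section
/- If θ = ⟨(μ_θ, ν_θ); r_θ⟩ is a D-IFV and ζ > 0 is a real number, then θ^{ζ_q} := ⟨(μ_θ^ζ, 1−(1−ν_θ)^ζ); √2·(r_θ/√2)^ζ⟩ is again a D-IFV; explicitly, μ_θ^ζ ∈ [0,1], 1−(1−ν_θ)^ζ ∈ [0,1], μ_θ^ζ + (1−(1−ν_θ)^ζ) ≤ 1, and √2·(r_θ/√2)^ζ ∈ [0,√2]. -/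
/-- If θ is a D-IFV and ζ > 0, then θ^{ζ_q} is again a D-IFV.
Real powers `x ^ ζ` are `Real.rpow`. -/
theorem dIFV_pow_q (μθ νθ rθ ζ : ℝ)
    (hμθ : μθ ∈ Set.Icc (0:ℝ) 1) (hνθ : νθ ∈ Set.Icc (0:ℝ) 1) (hθ : μθ + νθ ≤ 1)
    (hrθ : rθ ∈ Set.Icc (0:ℝ) (Real.sqrt 2)) (hζ : 0 < ζ) :
    μθ ^ ζ ∈ Set.Icc (0:ℝ) 1 ∧
    (1 - (1 - νθ) ^ ζ) ∈ Set.Icc (0:ℝ) 1 ∧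
    μθ ^ ζ + (1 - (1 - νθ) ^ ζ) ≤ 1 ∧
    Real.sqrt 2 * (rθ / Real.sqrt 2) ^ ζ ∈ Set.Icc (0:ℝ) (Real.sqrt 2) := by
  obtain ⟨hμ0, hμ1⟩ := hμθ
  obtain ⟨hν0, hν1⟩ := hνθ
  obtain ⟨hr0, hr2⟩ := hrθ
  have h1ν0 : (0:ℝ) ≤ 1 - νθ := by linarith
  have h1ν1 : 1 - νθ ≤ 1 := by linarith
  have hμpow : μθ ^ ζ ≤ 1 := Real.rpow_le_one hμ0 hμ1 hζ.le
  have hμpow0 : 0 ≤ μθ ^ ζ := Real.rpow_nonneg hμ0 ζ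
  have hνpow : (1 - νθ) ^ ζ ≤ 1 := Real.rpow_le_one h1ν0 h1ν1 hζ.le
  have hνpow0 : 0 ≤ (1 - νθ) ^ ζ := Real.rpow_nonneg h1ν0 ζ
  have hkey : μθ ^ ζ ≤ (1 - νθ) ^ ζ :=
    Real.rpow_le_rpow hμ0 (by linarith) hζ.le
  have hs : (0:ℝ) < Real.sqrt 2 := by positivity
  have hq0 : 0 ≤ rθ / Real.sqrt 2 := div_nonneg hr0 hs.le
  have hq1 : rθ / Real.sqrt 2 ≤ 1 := (div_le_one hs).mpr hr2
  have hqpow : (rθ / Real.sqrt 2) ^ ζ ≤ 1 := Real.rpow_le_one hq0 hq1 hζ.le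
  have hqpow0 : 0 ≤ (rθ / Real.sqrt 2) ^ ζ := Real.rpow_nonneg hq0 ζ
  refine ⟨⟨hμpow0, hμpow⟩, ⟨by linarith, by linarith⟩, by linarith, ⟨by positivity, ?_⟩⟩
  calc Real.sqrt 2 * (rθ / Real.sqrt 2) ^ ζ ≤ Real.sqrt 2 * 1 := by
        exact mul_le_mul_of_nonneg_left hqpow hs.le
    _ = Real.sqrt 2 := mul_one _
end

section
/- If θ = ⟨(μ_θ, ν_θ); r_θ⟩ is a D-IFV and ζ > 0 is a real number, then θ^{ζ_p} := ⟨(μ_θ^ζ, 1−(1−ν_θ)^ζ); √2 − √2(1 − r_θ/√2)^ζ⟩ is again a D-IFV; explicitly, μ_θ^ζ ∈ [0,1], 1−(1−ν_θ)^ζ ∈ [0,1], μ_θ^ζ + (1−(1−ν_θ)^ζ) ≤ 1, and √2 − √2(1 − r_θ/√2)^ζ ∈ [0,√2]. -/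
/-- If θ is a D-IFV and ζ > 0, then θ^{ζ_p} is again a D-IFV.
Real powers `x ^ ζ` are `Real.rpow`. -/
theorem dIFV_pow_p (μθ νθ rθ ζ : ℝ)
    (hμθ : μθ ∈ Set.Icc (0:ℝ) 1) (hνθ : νθ ∈ Set.Icc (0:ℝ) 1) (hθ : μθ + νθ ≤ 1)
    (hrθ : rθ ∈ Set.Icc (0:ℝ) (Real.sqrt 2)) (hζ : 0 < ζ) :
    μθ ^ ζ ∈ Set.Icc (0:ℝ) 1 ∧
    (1 - (1 - νθ) ^ ζ) ∈ Set.Icc (0:ℝ) 1 ∧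
    μθ ^ ζ + (1 - (1 - νθ) ^ ζ) ≤ 1 ∧
    (Real.sqrt 2 - Real.sqrt 2 * (1 - rθ / Real.sqrt 2) ^ ζ)
      ∈ Set.Icc (0:ℝ) (Real.sqrt 2) := by
  obtain ⟨hμ0, hμ1⟩ := hμθ
  obtain ⟨hν0, hν1⟩ := hνθ
  obtain ⟨hr0, hr2⟩ := hrθ
  have hs2 : (0:ℝ) < Real.sqrt 2 := Real.sqrt_pos.mpr (by norm_num)
  have h1ν0 : (0:ℝ) ≤ 1 - νθ := by linarith
  have h1ν1 : (1:ℝ) - νθ ≤ 1 := by linarith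
  have hμpow0 : 0 ≤ μθ ^ ζ := Real.rpow_nonneg hμ0 ζ
  have hμpow1 : μθ ^ ζ ≤ 1 := Real.rpow_le_one hμ0 hμ1 hζ.le
  have hνpow0 : 0 ≤ (1 - νθ) ^ ζ := Real.rpow_nonneg h1ν0 ζ
  have hνpow1 : (1 - νθ) ^ ζ ≤ 1 := Real.rpow_le_one h1ν0 h1ν1 hζ.le
  have hμν : μθ ^ ζ ≤ (1 - νθ) ^ ζ :=
    Real.rpow_le_rpow hμ0 (by linarith) hζ.le
  have hq0 : (0:ℝ) ≤ 1 - rθ / Real.sqrt 2 := by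
    have : rθ / Real.sqrt 2 ≤ 1 := (div_le_one hs2).mpr hr2
    linarith
  have hq1 : (1:ℝ) - rθ / Real.sqrt 2 ≤ 1 := by
    have : 0 ≤ rθ / Real.sqrt 2 := div_nonneg hr0 hs2.le
    linarith
  have hqpow0 : 0 ≤ (1 - rθ / Real.sqrt 2) ^ ζ := Real.rpow_nonneg hq0 ζ
  have hqpow1 : (1 - rθ / Real.sqrt 2) ^ ζ ≤ 1 := Real.rpow_le_one hq0 hq1 hζ.le
  refine ⟨⟨hμpow0, hμpow1⟩, ⟨by linarith, by linarith⟩, by linarith, ⟨?_, ?_⟩⟩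
  · nlinarith
  · nlinarith
end

section
/- Let θ_1, …, θ_m be D-IFVs and let ω_1, …, ω_m ∈ [0,1] with ∑_{k=1}^m ω_k = 1. Then the weighted arithmetic aggregation D-IFWAO_q(θ_1,…,θ_m) := ⟨(1 − ∏_{k=1}^m (1−μ_{θ_k})^{ω_k}, ∏_{k=1}^m ν_{θ_k}^{ω_k}); ∏_{k=1}^m r_{θ_k}^{ω_k}⟩ is a D-IFV; explicitly, its first two components lie in [0,1], their sum is at most 1, and ∏_{k=1}^m r_{θ_k}^{ω_k} ∈ [0,√2]. -/
open Finset

/-- the weighted arithmetic aggregation D-IFWAO_q of D-IFVs is a D-IFV.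
Real powers `x ^ ω` are `Real.rpow`. -/
theorem dIFWAO_q_isDIFV (m : ℕ) (μ ν r ω : Fin m → ℝ)
    (hμ : ∀ k, μ k ∈ Set.Icc (0:ℝ) 1) (hν : ∀ k, ν k ∈ Set.Icc (0:ℝ) 1)
    (hμν : ∀ k, μ k + ν k ≤ 1) (hr : ∀ k, r k ∈ Set.Icc (0:ℝ) (Real.sqrt 2))
    (hω : ∀ k, ω k ∈ Set.Icc (0:ℝ) 1) (hωsum : ∑ k, ω k = 1) :
    (1 - ∏ k, (1 - μ k) ^ (ω k)) ∈ Set.Icc (0:ℝ) 1 ∧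
    (∏ k, (ν k) ^ (ω k)) ∈ Set.Icc (0:ℝ) 1 ∧
    (1 - ∏ k, (1 - μ k) ^ (ω k)) + (∏ k, (ν k) ^ (ω k)) ≤ 1 ∧
    (∏ k, (r k) ^ (ω k)) ∈ Set.Icc (0:ℝ) (Real.sqrt 2) := by
  have hμ0 : ∀ k, (0:ℝ) ≤ 1 - μ k := fun k => by linarith [(hμ k).2]
  have hμ1 : ∀ k, 1 - μ k ≤ 1 := fun k => by linarith [(hμ k).1]
  have hA0 : (0:ℝ) ≤ ∏ k, (1 - μ k) ^ (ω k) :=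
    Finset.prod_nonneg fun k _ => Real.rpow_nonneg (hμ0 k) _
  have hA1 : ∏ k, (1 - μ k) ^ (ω k) ≤ 1 :=
    Finset.prod_le_one (fun k _ => Real.rpow_nonneg (hμ0 k) _)
      (fun k _ => Real.rpow_le_one (hμ0 k) (hμ1 k) (hω k).1)
  have hB0 : (0:ℝ) ≤ ∏ k, (ν k) ^ (ω k) :=
    Finset.prod_nonneg fun k _ => Real.rpow_nonneg (hν k).1 _
  have hB1 : ∏ k, (ν k) ^ (ω k) ≤ 1 :=
    Finset.prod_le_one (fun k _ => Real.rpow_nonneg (hν k).1 _)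
      (fun k _ => Real.rpow_le_one (hν k).1 (hν k).2 (hω k).1)
  have hBA : ∏ k, (ν k) ^ (ω k) ≤ ∏ k, (1 - μ k) ^ (ω k) :=
    Finset.prod_le_prod (fun k _ => Real.rpow_nonneg (hν k).1 _)
      (fun k _ => Real.rpow_le_rpow (hν k).1 (by linarith [hμν k]) (hω k).1)
  have hr0 : (0:ℝ) ≤ ∏ k, (r k) ^ (ω k) :=
    Finset.prod_nonneg fun k _ => Real.rpow_nonneg (hr k).1 _
  have hr1 : ∏ k, (r k) ^ (ω k) ≤ Real.sqrt 2 := by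
    calc ∏ k, (r k) ^ (ω k) ≤ ∏ k, (Real.sqrt 2) ^ (ω k) :=
          Finset.prod_le_prod (fun k _ => Real.rpow_nonneg (hr k).1 _)
            (fun k _ => Real.rpow_le_rpow (hr k).1 (hr k).2 (hω k).1)
      _ = (Real.sqrt 2) ^ (∑ k, ω k) :=
          (Real.rpow_sum_of_pos (by positivity) _ _).symm
      _ = Real.sqrt 2 := by rw [hωsum, Real.rpow_one]
  exact ⟨⟨by linarith, by linarith⟩, ⟨hB0, hB1⟩, by linarith, hr0, hr1⟩
end

section
/- Let θ_1, …, θ_m be D-IFVs and let ω_1, …, ω_m ∈ [0,1] with ∑_{k=1}^m ω_k = 1. Then the weighted arithmetic aggregation D-IFWAO_p(θ_1,…,θ_m) := ⟨(1 − ∏_{k=1}^m (1−μ_{θ_k})^{ω_k}, ∏_{k=1}^m ν_{θ_k}^{ω_k}); √2 − ∏_{k=1}^m (√2 − r_{θ_k})^{ω_k}⟩ is a D-IFV; explicitly, its first two components lie in [0,1], their sum is at most 1, and √2 − ∏_{k=1}^m (√2 − r_{θ_k})^{ω_k} ∈ [0,√2]. -/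
open Finset

/-- the weighted arithmetic aggregation D-IFWAO_p of D-IFVs is a D-IFV.
Real powers `x ^ ω` are `Real.rpow`. -/
theorem dIFWAO_p_isDIFV (m : ℕ) (μ ν r ω : Fin m → ℝ)
    (hμ : ∀ k, μ k ∈ Set.Icc (0:ℝ) 1) (hν : ∀ k, ν k ∈ Set.Icc (0:ℝ) 1)
    (hμν : ∀ k, μ k + ν k ≤ 1) (hr : ∀ k, r k ∈ Set.Icc (0:ℝ) (Real.sqrt 2))
    (hω : ∀ k, ω k ∈ Set.Icc (0:ℝ) 1) (hωsum : ∑ k, ω k = 1) :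
    (1 - ∏ k, (1 - μ k) ^ (ω k)) ∈ Set.Icc (0:ℝ) 1 ∧
    (∏ k, (ν k) ^ (ω k)) ∈ Set.Icc (0:ℝ) 1 ∧
    (1 - ∏ k, (1 - μ k) ^ (ω k)) + (∏ k, (ν k) ^ (ω k)) ≤ 1 ∧
    (Real.sqrt 2 - ∏ k, (Real.sqrt 2 - r k) ^ (ω k)) ∈ Set.Icc (0:ℝ) (Real.sqrt 2) := by
  have hωnn : ∀ k, 0 ≤ ω k := fun k => (hω k).1
  have hP1 : ∀ k, (0:ℝ) ≤ (1 - μ k) ^ (ω k) := fun k =>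
    Real.rpow_nonneg (by linarith [(hμ k).2]) _
  have hP1le : (∏ k, (1 - μ k) ^ (ω k)) ≤ 1 := by
    apply Finset.prod_le_one (fun k _ => hP1 k)
    intro k _
    exact Real.rpow_le_one (by linarith [(hμ k).2]) (by linarith [(hμ k).1]) (hωnn k)
  have hP1nn : (0:ℝ) ≤ ∏ k, (1 - μ k) ^ (ω k) :=
    Finset.prod_nonneg (fun k _ => hP1 k)
  have hP2nn : (0:ℝ) ≤ ∏ k, (ν k) ^ (ω k) :=
    Finset.prod_nonneg (fun k _ => Real.rpow_nonneg (hν k).1 _)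
  have hP2le : (∏ k, (ν k) ^ (ω k)) ≤ 1 := by
    apply Finset.prod_le_one (fun k _ => Real.rpow_nonneg (hν k).1 _)
    intro k _
    exact Real.rpow_le_one (hν k).1 (hν k).2 (hωnn k)
  have hsum : (∏ k, (ν k) ^ (ω k)) ≤ ∏ k, (1 - μ k) ^ (ω k) := by
    apply Finset.prod_le_prod (fun k _ => Real.rpow_nonneg (hν k).1 _)
    intro k _
    exact Real.rpow_le_rpow (hν k).1 (by linarith [hμν k]) (hωnn k)
  have hs2 : (0:ℝ) ≤ Real.sqrt 2 := Real.sqrt_nonneg 2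
  have hP3nn : (0:ℝ) ≤ ∏ k, (Real.sqrt 2 - r k) ^ (ω k) :=
    Finset.prod_nonneg (fun k _ => Real.rpow_nonneg (by linarith [(hr k).2]) _)
  have hP3le : (∏ k, (Real.sqrt 2 - r k) ^ (ω k)) ≤ Real.sqrt 2 := by
    have h1 : (∏ k, (Real.sqrt 2 - r k) ^ (ω k)) ≤ ∏ k, (Real.sqrt 2) ^ (ω k) := by
      apply Finset.prod_le_prod
        (fun k _ => Real.rpow_nonneg (by linarith [(hr k).2]) _)
      intro k _
      exact Real.rpow_le_rpow (by linarith [(hr k).2]) (by linarith [(hr k).1]) (hωnn k)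
    have h2 : (∏ k, (Real.sqrt 2) ^ (ω k)) = Real.sqrt 2 := by
      rw [← Real.rpow_sum_of_nonneg hs2 (fun k _ => hωnn k), hωsum, Real.rpow_one]
    linarith
  refine ⟨⟨by linarith, by linarith⟩, ⟨hP2nn, hP2le⟩, by linarith, by linarith, by linarith⟩
end

section
/- Let θ_1, …, θ_m be D-IFVs and let ω_1, …, ω_m ∈ [0,1] with ∑_{k=1}^m ω_k = 1. Then the weighted geometric aggregation D-IFWGO_q(θ_1,…,θ_m) := ⟨(∏_{k=1}^m μ_{θ_k}^{ω_k}, 1 − ∏_{k=1}^m (1−ν_{θ_k})^{ω_k}); ∏_{k=1}^m r_{θ_k}^{ω_k}⟩ is a D-IFV; explicitly, its first two components lie in [0,1], their sum is at most 1, and ∏_{k=1}^m r_{θ_k}^{ω_k} ∈ [0,√2]. -/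
open Finset

/-- the weighted geometric aggregation D-IFWGO_q of D-IFVs is a D-IFV.
Real powers `x ^ ω` are `Real.rpow`. -/
theorem dIFWGO_q_isDIFV (m : ℕ) (μ ν r ω : Fin m → ℝ)
    (hμ : ∀ k, μ k ∈ Set.Icc (0:ℝ) 1) (hν : ∀ k, ν k ∈ Set.Icc (0:ℝ) 1)
    (hμν : ∀ k, μ k + ν k ≤ 1) (hr : ∀ k, r k ∈ Set.Icc (0:ℝ) (Real.sqrt 2))
    (hω : ∀ k, ω k ∈ Set.Icc (0:ℝ) 1) (hωsum : ∑ k, ω k = 1) :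
    (∏ k, (μ k) ^ (ω k)) ∈ Set.Icc (0:ℝ) 1 ∧
    (1 - ∏ k, (1 - ν k) ^ (ω k)) ∈ Set.Icc (0:ℝ) 1 ∧
    (∏ k, (μ k) ^ (ω k)) + (1 - ∏ k, (1 - ν k) ^ (ω k)) ≤ 1 ∧
    (∏ k, (r k) ^ (ω k)) ∈ Set.Icc (0:ℝ) (Real.sqrt 2) := by
  have hμ0 : ∀ k, 0 ≤ μ k := fun k => (hμ k).1
  have hω0 : ∀ k, 0 ≤ ω k := fun k => (hω k).1
  have hν0 : ∀ k, 0 ≤ 1 - ν k := fun k => by linarith [(hν k).2]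
  have hν1 : ∀ k, 1 - ν k ≤ 1 := fun k => by linarith [(hν k).1]
  have hPμ0 : 0 ≤ ∏ k, (μ k) ^ (ω k) :=
    Finset.prod_nonneg fun k _ => Real.rpow_nonneg (hμ0 k) _
  have hPμ1 : ∏ k, (μ k) ^ (ω k) ≤ 1 :=
    Finset.prod_le_one (fun k _ => Real.rpow_nonneg (hμ0 k) _)
      (fun k _ => Real.rpow_le_one (hμ0 k) (hμ k).2 (hω0 k))
  have hPν0 : 0 ≤ ∏ k, (1 - ν k) ^ (ω k) :=
    Finset.prod_nonneg fun k _ => Real.rpow_nonneg (hν0 k) _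
  have hPν1 : ∏ k, (1 - ν k) ^ (ω k) ≤ 1 :=
    Finset.prod_le_one (fun k _ => Real.rpow_nonneg (hν0 k) _)
      (fun k _ => Real.rpow_le_one (hν0 k) (hν1 k) (hω0 k))
  have hle : ∏ k, (μ k) ^ (ω k) ≤ ∏ k, (1 - ν k) ^ (ω k) :=
    Finset.prod_le_prod (fun k _ => Real.rpow_nonneg (hμ0 k) _)
      (fun k _ => Real.rpow_le_rpow (hμ0 k) (by linarith [hμν k]) (hω0 k))
  have hr0 : 0 ≤ ∏ k, (r k) ^ (ω k) :=
    Finset.prod_nonneg fun k _ => Real.rpow_nonneg (hr k).1 _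
  have h2 : (0:ℝ) < Real.sqrt 2 := Real.sqrt_pos.mpr (by norm_num)
  have hrle : ∏ k, (r k) ^ (ω k) ≤ Real.sqrt 2 := by
    calc ∏ k, (r k) ^ (ω k) ≤ ∏ k, (Real.sqrt 2) ^ (ω k) :=
          Finset.prod_le_prod (fun k _ => Real.rpow_nonneg (hr k).1 _)
            (fun k _ => Real.rpow_le_rpow (hr k).1 (hr k).2 (hω0 k))
      _ = (Real.sqrt 2) ^ (∑ k, ω k) := (Real.rpow_sum_of_pos h2 _ _).symm
      _ = Real.sqrt 2 := by rw [hωsum, Real.rpow_one]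
  exact ⟨⟨hPμ0, hPμ1⟩, ⟨by linarith, by linarith⟩, by linarith, ⟨hr0, hrle⟩⟩
end

section
/- Let θ_1, …, θ_m be D-IFVs and let ω_1, …, ω_m ∈ [0,1] with ∑_{k=1}^m ω_k = 1. Then the weighted geometric aggregation D-IFWGO_p(θ_1,…,θ_m) := ⟨(∏_{k=1}^m μ_{θ_k}^{ω_k}, 1 − ∏_{k=1}^m (1−ν_{θ_k})^{ω_k}); √2 − ∏_{k=1}^m (√2 − r_{θ_k})^{ω_k}⟩ is a D-IFV; explicitly, its first two components lie in [0,1], their sum is at most 1, and √2 − ∏_{k=1}^m (√2 − r_{θ_k})^{ω_k} ∈ [0,√2]. -/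
open Finset

lemma aux_prod_rpow_le {m : ℕ} {a ω : Fin m → ℝ} {c : ℝ} (hc : 0 < c)
    (ha : ∀ k, 0 ≤ a k) (hac : ∀ k, a k ≤ c) (hω : ∀ k, 0 ≤ ω k)
    (hωsum : ∑ k, ω k = 1) : ∏ k, (a k) ^ (ω k) ≤ c := by
  calc ∏ k, (a k) ^ (ω k) ≤ ∏ k, c ^ (ω k) := by
        apply Finset.prod_le_prod
        · intro k _; exact Real.rpow_nonneg (ha k) _
        · intro k _; exact Real.rpow_le_rpow (ha k) (hac k) (hω k)
    _ = c ^ (∑ k, ω k) := (Real.rpow_sum_of_pos hc ω univ).symm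
    _ = c := by rw [hωsum, Real.rpow_one]

/-- the weighted geometric aggregation D-IFWGO_p of D-IFVs is a D-IFV.
Real powers `x ^ ω` are `Real.rpow`. -/
theorem dIFWGO_p_isDIFV (m : ℕ) (μ ν r ω : Fin m → ℝ)
    (hμ : ∀ k, μ k ∈ Set.Icc (0:ℝ) 1) (hν : ∀ k, ν k ∈ Set.Icc (0:ℝ) 1)
    (hμν : ∀ k, μ k + ν k ≤ 1) (hr : ∀ k, r k ∈ Set.Icc (0:ℝ) (Real.sqrt 2))
    (hω : ∀ k, ω k ∈ Set.Icc (0:ℝ) 1) (hωsum : ∑ k, ω k = 1) :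
    (∏ k, (μ k) ^ (ω k)) ∈ Set.Icc (0:ℝ) 1 ∧
    (1 - ∏ k, (1 - ν k) ^ (ω k)) ∈ Set.Icc (0:ℝ) 1 ∧
    (∏ k, (μ k) ^ (ω k)) + (1 - ∏ k, (1 - ν k) ^ (ω k)) ≤ 1 ∧
    (Real.sqrt 2 - ∏ k, (Real.sqrt 2 - r k) ^ (ω k)) ∈ Set.Icc (0:ℝ) (Real.sqrt 2) := by
  have hω0 : ∀ k, 0 ≤ ω k := fun k => (hω k).1
  have hμ0 : ∀ k, 0 ≤ μ k := fun k => (hμ k).1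
  have hν1 : ∀ k, 0 ≤ 1 - ν k := fun k => by linarith [(hν k).2]
  have hμprod_nonneg : 0 ≤ ∏ k, (μ k) ^ (ω k) :=
    Finset.prod_nonneg fun k _ => Real.rpow_nonneg (hμ0 k) _
  have hμprod_le : ∏ k, (μ k) ^ (ω k) ≤ 1 :=
    aux_prod_rpow_le one_pos hμ0 (fun k => (hμ k).2) hω0 hωsum
  have hνprod_nonneg : 0 ≤ ∏ k, (1 - ν k) ^ (ω k) :=
    Finset.prod_nonneg fun k _ => Real.rpow_nonneg (hν1 k) _
  have hνprod_le : ∏ k, (1 - ν k) ^ (ω k) ≤ 1 :=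
    aux_prod_rpow_le one_pos hν1 (fun k => by linarith [(hν k).1]) hω0 hωsum
  have hμν_prod : ∏ k, (μ k) ^ (ω k) ≤ ∏ k, (1 - ν k) ^ (ω k) := by
    apply Finset.prod_le_prod
    · intro k _; exact Real.rpow_nonneg (hμ0 k) _
    · intro k _; exact Real.rpow_le_rpow (hμ0 k) (by linarith [hμν k]) (hω0 k)
  have h2 : (0:ℝ) < Real.sqrt 2 := Real.sqrt_pos.mpr (by norm_num)
  have hr0 : ∀ k, 0 ≤ Real.sqrt 2 - r k := fun k => by linarith [(hr k).2]
  have hrprod_nonneg : 0 ≤ ∏ k, (Real.sqrt 2 - r k) ^ (ω k) :=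
    Finset.prod_nonneg fun k _ => Real.rpow_nonneg (hr0 k) _
  have hrprod_le : ∏ k, (Real.sqrt 2 - r k) ^ (ω k) ≤ Real.sqrt 2 :=
    aux_prod_rpow_le h2 hr0 (fun k => by linarith [(hr k).1]) hω0 hωsum
  exact ⟨⟨hμprod_nonneg, hμprod_le⟩, ⟨by linarith, by linarith⟩, by linarith,
    ⟨by linarith, by linarith⟩⟩
end

section
/- Let τ be a fuzzy measure on X = {1,…,m}, let θ_1, …, θ_m be D-IFVs, let σ be a permutation of {1,…,m}, and set F_k := {σ(k),…,σ(m)} for k = 1,…,m, F_{m+1} := ∅, and w_k := τ(F_k) − τ(F_{k+1}). Then the disc intuitionistic fuzzy Choquet arithmetic integral D-IFCAIO_q^τ(θ_1,…,θ_m) := ⟨(1 − ∏_{k=1}^m (1−μ_{θ_{σ(k)}})^{w_k}, ∏_{k=1}^m ν_{θ_{σ(k)}}^{w_k}); ∏_{k=1}^m r_{θ_{σ(k)}}^{w_k}⟩ is a D-IFV; explicitly, its first two components lie in [0,1], their sum is at most 1, and ∏_{k=1}^m r_{θ_{σ(k)}}^{w_k} ∈ [0,√2]. -/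
open Finset

/-- the disc intuitionistic fuzzy Choquet arithmetic integral
D-IFCAIO_q^τ of D-IFVs θ_1,…,θ_m is a D-IFV.  Here X = Fin m (0-based), σ is a
permutation, F k = {σ(k), σ(k+1), …} (so F m = ∅), and the Choquet weights are
w k = τ(F k) − τ(F (k+1)).  Real powers `x ^ w` are `Real.rpow`. -/
theorem dIFCAIO_q_isDIFV (m : ℕ) (τ : Finset (Fin m) → ℝ)
    (hrange : ∀ A, τ A ∈ Set.Icc (0:ℝ) 1)
    (hempty : τ ∅ = 0) (huniv : τ Finset.univ = 1)
    (hmono : ∀ A B : Finset (Fin m), A ⊆ B → τ A ≤ τ B)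
    (μ ν r : Fin m → ℝ)
    (hμ : ∀ k, μ k ∈ Set.Icc (0:ℝ) 1) (hν : ∀ k, ν k ∈ Set.Icc (0:ℝ) 1)
    (hμν : ∀ k, μ k + ν k ≤ 1) (hr : ∀ k, r k ∈ Set.Icc (0:ℝ) (Real.sqrt 2))
    (σ : Equiv.Perm (Fin m)) (F : ℕ → Finset (Fin m))
    (hF : ∀ n, F n = (Finset.univ.filter (fun j : Fin m => n ≤ j.val)).image σ)
    (w : Fin m → ℝ) (hw : ∀ k : Fin m, w k = τ (F k.val) - τ (F (k.val + 1))) :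
    (1 - ∏ k, (1 - μ (σ k)) ^ (w k)) ∈ Set.Icc (0:ℝ) 1 ∧
    (∏ k, (ν (σ k)) ^ (w k)) ∈ Set.Icc (0:ℝ) 1 ∧
    (1 - ∏ k, (1 - μ (σ k)) ^ (w k)) + (∏ k, (ν (σ k)) ^ (w k)) ≤ 1 ∧
    (∏ k, (r (σ k)) ^ (w k)) ∈ Set.Icc (0:ℝ) (Real.sqrt 2) := by

  have hw0 : ∀ k : Fin m, 0 ≤ w k := by
    intro k
    rw [hw k, sub_nonneg]
    apply hmono
    rw [hF, hF]
    apply Finset.image_subset_image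
    intro j hj
    simp only [Finset.mem_filter, Finset.mem_univ, true_and] at hj ⊢
    omega
  have hsum : ∑ k, w k = 1 := by
    have h0 : F 0 = Finset.univ := by
      rw [hF]
      simp [Finset.image_univ_equiv]
    have hm : F m = ∅ := by
      rw [hF]
      have : Finset.univ.filter (fun j : Fin m => m ≤ j.val) = ∅ := by
        apply Finset.filter_false_of_mem
        intro j _; omega
      simp [this]
    calc ∑ k, w k = ∑ i ∈ Finset.range m, (τ (F i) - τ (F (i+1))) := by
          simp only [hw]
          exact Fin.sum_univ_eq_sum_range (fun i => τ (F i) - τ (F (i+1))) m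
      _ = τ (F 0) - τ (F m) := Finset.sum_range_sub' (fun i => τ (F i)) m
      _ = 1 := by rw [h0, hm, huniv, hempty]; ring
  have prod01 : ∀ f : Fin m → ℝ, (∀ k, f k ∈ Set.Icc (0:ℝ) 1) →
      (∏ k, (f (σ k)) ^ (w k)) ∈ Set.Icc (0:ℝ) 1 := by
    intro f hf
    constructor
    · exact Finset.prod_nonneg fun k _ => Real.rpow_nonneg (hf (σ k)).1 _
    · exact Finset.prod_le_one (fun k _ => Real.rpow_nonneg (hf (σ k)).1 _)
        (fun k _ => Real.rpow_le_one (hf (σ k)).1 (hf (σ k)).2 (hw0 k))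
  have hμ' : ∀ k, (1 - μ k) ∈ Set.Icc (0:ℝ) 1 := by
    intro k
    constructor <;> [linarith [(hμ k).2]; linarith [(hμ k).1]]
  have h1 := prod01 _ hμ'
  have h2 := prod01 _ hν
  refine ⟨⟨by linarith [h1.2], by linarith [h1.1]⟩, h2, ?_, ?_⟩
  · have hle : (∏ k, (ν (σ k)) ^ (w k)) ≤ ∏ k, (1 - μ (σ k)) ^ (w k) := by
      apply Finset.prod_le_prod
      · intro k _; exact Real.rpow_nonneg (hν (σ k)).1 _
      · intro k _
        exact Real.rpow_le_rpow (hν (σ k)).1 (by linarith [hμν (σ k)]) (hw0 k)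
    linarith
  · constructor
    · exact Finset.prod_nonneg fun k _ => Real.rpow_nonneg (hr (σ k)).1 _
    · have hs2 : (0:ℝ) < Real.sqrt 2 := Real.sqrt_pos.mpr (by norm_num)
      calc (∏ k, (r (σ k)) ^ (w k)) ≤ ∏ k, (Real.sqrt 2) ^ (w k) := by
            apply Finset.prod_le_prod
            · intro k _; exact Real.rpow_nonneg (hr (σ k)).1 _
            · intro k _; exact Real.rpow_le_rpow (hr (σ k)).1 (hr (σ k)).2 (hw0 k)
        _ = (Real.sqrt 2) ^ (∑ k, w k) := (Real.rpow_sum_of_pos hs2 w Finset.univ).symm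
        _ = Real.sqrt 2 := by rw [hsum, Real.rpow_one]
end

section
/- Let τ be a fuzzy measure on X = {1,…,m}, let θ_1, …, θ_m be D-IFVs, let σ be a permutation of {1,…,m}, and set F_k := {σ(k),…,σ(m)} for k = 1,…,m, F_{m+1} := ∅, and w_k := τ(F_k) − τ(F_{k+1}). Then the disc intuitionistic fuzzy Choquet arithmetic integral D-IFCAIO_p^τ(θ_1,…,θ_m) := ⟨(1 − ∏_{k=1}^m (1−μ_{θ_{σ(k)}})^{w_k}, ∏_{k=1}^m ν_{θ_{σ(k)}}^{w_k}); √2 − ∏_{k=1}^m (√2 − r_{θ_{σ(k)}})^{w_k}⟩ is a D-IFV; explicitly, its first two components lie in [0,1], their sum is at most 1, and √2 − ∏_{k=1}^m (√2 − r_{θ_{σ(k)}})^{w_k} ∈ [0,√2]. -/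
open Finset

/-- the disc intuitionistic fuzzy Choquet arithmetic integral
D-IFCAIO_p^τ of D-IFVs θ_1,…,θ_m is a D-IFV.  Here X = Fin m (0-based), σ is a
permutation, F k = {σ(k), σ(k+1), …} (so F m = ∅), and the Choquet weights are
w k = τ(F k) − τ(F (k+1)).  Real powers `x ^ w` are `Real.rpow`. -/
theorem dIFCAIO_p_isDIFV (m : ℕ) (τ : Finset (Fin m) → ℝ)
    (hrange : ∀ A, τ A ∈ Set.Icc (0:ℝ) 1)
    (hempty : τ ∅ = 0) (huniv : τ Finset.univ = 1)
    (hmono : ∀ A B : Finset (Fin m), A ⊆ B → τ A ≤ τ B)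
    (μ ν r : Fin m → ℝ)
    (hμ : ∀ k, μ k ∈ Set.Icc (0:ℝ) 1) (hν : ∀ k, ν k ∈ Set.Icc (0:ℝ) 1)
    (hμν : ∀ k, μ k + ν k ≤ 1) (hr : ∀ k, r k ∈ Set.Icc (0:ℝ) (Real.sqrt 2))
    (σ : Equiv.Perm (Fin m)) (F : ℕ → Finset (Fin m))
    (hF : ∀ n, F n = (Finset.univ.filter (fun j : Fin m => n ≤ j.val)).image σ)
    (w : Fin m → ℝ) (hw : ∀ k : Fin m, w k = τ (F k.val) - τ (F (k.val + 1))) :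
    (1 - ∏ k, (1 - μ (σ k)) ^ (w k)) ∈ Set.Icc (0:ℝ) 1 ∧
    (∏ k, (ν (σ k)) ^ (w k)) ∈ Set.Icc (0:ℝ) 1 ∧
    (1 - ∏ k, (1 - μ (σ k)) ^ (w k)) + (∏ k, (ν (σ k)) ^ (w k)) ≤ 1 ∧
    (Real.sqrt 2 - ∏ k, (Real.sqrt 2 - r (σ k)) ^ (w k))
      ∈ Set.Icc (0:ℝ) (Real.sqrt 2) := by
  have h2 : (1:ℝ) ≤ Real.sqrt 2 := by
    nlinarith [Real.sq_sqrt (by norm_num : (2:ℝ) ≥ 0), Real.sqrt_nonneg 2]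
  have h2pos : (0:ℝ) < Real.sqrt 2 := by linarith
  have hwnn : ∀ k : Fin m, 0 ≤ w k := by
    intro k
    rw [hw k]
    have hsub : F (k.val + 1) ⊆ F k.val := by
      rw [hF, hF]
      apply Finset.image_subset_image
      intro j hj
      simp only [Finset.mem_filter, Finset.mem_univ, true_and] at *
      omega
    linarith [hmono _ _ hsub]
  -- bounds on the two products with base in [0,1]
  have hP0 : 0 ≤ ∏ k, (1 - μ (σ k)) ^ (w k) :=
    Finset.prod_nonneg fun k _ => Real.rpow_nonneg (by linarith [(hμ (σ k)).2]) _
  have hP1 : ∏ k, (1 - μ (σ k)) ^ (w k) ≤ 1 :=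
    Finset.prod_le_one (fun k _ => Real.rpow_nonneg (by linarith [(hμ (σ k)).2]) _)
      (fun k _ => Real.rpow_le_one (by linarith [(hμ (σ k)).2]) (by linarith [(hμ (σ k)).1]) (hwnn k))
  have hQ0 : 0 ≤ ∏ k, (ν (σ k)) ^ (w k) :=
    Finset.prod_nonneg fun k _ => Real.rpow_nonneg (hν (σ k)).1 _
  have hQ1 : ∏ k, (ν (σ k)) ^ (w k) ≤ 1 :=
    Finset.prod_le_one (fun k _ => Real.rpow_nonneg (hν (σ k)).1 _)
      (fun k _ => Real.rpow_le_one (hν (σ k)).1 (hν (σ k)).2 (hwnn k))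
  have hQP : (∏ k, (ν (σ k)) ^ (w k)) ≤ ∏ k, (1 - μ (σ k)) ^ (w k) :=
    Finset.prod_le_prod (fun k _ => Real.rpow_nonneg (hν (σ k)).1 _)
      (fun k _ => Real.rpow_le_rpow (hν (σ k)).1 (by linarith [hμν (σ k)]) (hwnn k))
  have hR0 : 0 ≤ ∏ k, (Real.sqrt 2 - r (σ k)) ^ (w k) :=
    Finset.prod_nonneg fun k _ => Real.rpow_nonneg (by linarith [(hr (σ k)).2]) _
  -- the last bound needs ∑ w = 1, which requires m ≠ 0 (m = 0 is contradictory)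
  rcases Nat.eq_zero_or_pos m with hm | hm
  · subst hm
    rw [Finset.univ_eq_empty, hempty] at huniv
    norm_num at huniv
  have hsum : ∑ k : Fin m, w k = 1 := by
    have : ∑ k : Fin m, w k = ∑ k ∈ Finset.range m, (τ (F k) - τ (F (k + 1))) := by
      rw [← Fin.sum_univ_eq_sum_range]
      exact Finset.sum_congr rfl fun k _ => hw k
    rw [this, Finset.sum_range_sub' (fun k => τ (F k))]
    have hF0 : F 0 = Finset.univ := by
      rw [hF]
      have : (Finset.univ.filter (fun j : Fin m => 0 ≤ j.val)) = Finset.univ := by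
        simp
      rw [this]
      exact Finset.image_univ_equiv σ
    have hFm : F m = ∅ := by
      rw [hF]
      have : (Finset.univ.filter (fun j : Fin m => m ≤ j.val)) = ∅ := by
        apply Finset.filter_false_of_mem
        intro j _
        omega
      rw [this, Finset.image_empty]
    rw [hF0, hFm, huniv, hempty]
    ring
  have hR1 : ∏ k, (Real.sqrt 2 - r (σ k)) ^ (w k) ≤ Real.sqrt 2 := by
    calc ∏ k, (Real.sqrt 2 - r (σ k)) ^ (w k)
        ≤ ∏ k : Fin m, (Real.sqrt 2) ^ (w k) :=
          Finset.prod_le_prod (fun k _ => Real.rpow_nonneg (by linarith [(hr (σ k)).2]) _)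
            (fun k _ => Real.rpow_le_rpow (by linarith [(hr (σ k)).2])
              (by linarith [(hr (σ k)).1]) (hwnn k))
      _ = (Real.sqrt 2) ^ (∑ k : Fin m, w k) :=
          (Real.rpow_sum_of_pos h2pos w Finset.univ).symm
      _ = Real.sqrt 2 := by rw [hsum, Real.rpow_one]
  refine ⟨⟨by linarith, by linarith⟩, ⟨hQ0, hQ1⟩, by linarith, by constructor <;> linarith⟩
end

section
/- Let τ be a fuzzy measure on X = {1,…,m}, let θ_1, …, θ_m be D-IFVs, let σ be a permutation of {1,…,m}, and set F_k := {σ(k),…,σ(m)} for k = 1,…,m, F_{m+1} := ∅, and w_k := τ(F_k) − τ(F_{k+1}). Then the disc intuitionistic fuzzy Choquet geometric integral D-IFCGIO_q^τ(θ_1,…,θ_m) := ⟨(∏_{k=1}^m μ_{θ_{σ(k)}}^{w_k}, 1 − ∏_{k=1}^m (1−ν_{θ_{σ(k)}})^{w_k}); ∏_{k=1}^m r_{θ_{σ(k)}}^{w_k}⟩ is a D-IFV; explicitly, its first two components lie in [0,1], their sum is at most 1, and ∏_{k=1}^m r_{θ_{σ(k)}}^{w_k} ∈ [0,√2]. -/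
open Finset

/-- the disc intuitionistic fuzzy Choquet geometric integral
D-IFCGIO_q^τ of D-IFVs θ_1,…,θ_m is a D-IFV.  Here X = Fin m (0-based), σ is a
permutation, F k = {σ(k), σ(k+1), …} (so F m = ∅), and the Choquet weights are
w k = τ(F k) − τ(F (k+1)).  Real powers `x ^ w` are `Real.rpow`. -/
theorem dIFCGIO_q_isDIFV (m : ℕ) (τ : Finset (Fin m) → ℝ)
    (hrange : ∀ A, τ A ∈ Set.Icc (0:ℝ) 1)
    (hempty : τ ∅ = 0) (huniv : τ Finset.univ = 1)
    (hmono : ∀ A B : Finset (Fin m), A ⊆ B → τ A ≤ τ B)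
    (μ ν r : Fin m → ℝ)
    (hμ : ∀ k, μ k ∈ Set.Icc (0:ℝ) 1) (hν : ∀ k, ν k ∈ Set.Icc (0:ℝ) 1)
    (hμν : ∀ k, μ k + ν k ≤ 1) (hr : ∀ k, r k ∈ Set.Icc (0:ℝ) (Real.sqrt 2))
    (σ : Equiv.Perm (Fin m)) (F : ℕ → Finset (Fin m))
    (hF : ∀ n, F n = (Finset.univ.filter (fun j : Fin m => n ≤ j.val)).image σ)
    (w : Fin m → ℝ) (hw : ∀ k : Fin m, w k = τ (F k.val) - τ (F (k.val + 1))) :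
    (∏ k, (μ (σ k)) ^ (w k)) ∈ Set.Icc (0:ℝ) 1 ∧
    (1 - ∏ k, (1 - ν (σ k)) ^ (w k)) ∈ Set.Icc (0:ℝ) 1 ∧
    (∏ k, (μ (σ k)) ^ (w k)) + (1 - ∏ k, (1 - ν (σ k)) ^ (w k)) ≤ 1 ∧
    (∏ k, (r (σ k)) ^ (w k)) ∈ Set.Icc (0:ℝ) (Real.sqrt 2) := by
  have hwnn : ∀ k : Fin m, 0 ≤ w k := by
    intro k
    rw [hw k]
    have hsub : F (k.val + 1) ⊆ F k.val := by
      rw [hF, hF]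
      apply Finset.image_subset_image
      intro j hj
      simp only [Finset.mem_filter, Finset.mem_univ, true_and] at hj ⊢
      omega
    linarith [hmono _ _ hsub]
  have hsum : ∑ k, w k = 1 := by
    have : ∑ k, w k = ∑ k ∈ Finset.range m, (τ (F k) - τ (F (k+1))) := by
      rw [← Fin.sum_univ_eq_sum_range (fun n => τ (F n) - τ (F (n+1)))]
      exact Finset.sum_congr rfl (fun i _ => hw i)
    rw [this, Finset.sum_range_sub' (fun k => τ (F k))]
    have hF0 : F 0 = Finset.univ := by
      rw [hF]
      simp [Finset.filter_true_of_mem, Finset.image_univ_equiv]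
    have hFm : F m = ∅ := by
      rw [hF]
      have : Finset.univ.filter (fun j : Fin m => m ≤ j.val) = ∅ := by
        apply Finset.filter_false_of_mem
        intro j _
        omega
      simp [this]
    rw [hF0, hFm, huniv, hempty]
    ring
  have h1 : (∏ k, (μ (σ k)) ^ (w k)) ∈ Set.Icc (0:ℝ) 1 := by
    constructor
    · exact Finset.prod_nonneg fun k _ => Real.rpow_nonneg (hμ (σ k)).1 _
    · exact Finset.prod_le_one (fun k _ => Real.rpow_nonneg (hμ (σ k)).1 _)
        (fun k _ => Real.rpow_le_one (hμ (σ k)).1 (hμ (σ k)).2 (hwnn k))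
  have h2' : (∏ k, (1 - ν (σ k)) ^ (w k)) ∈ Set.Icc (0:ℝ) 1 := by
    constructor
    · exact Finset.prod_nonneg fun k _ => Real.rpow_nonneg (by linarith [(hν (σ k)).2]) _
    · exact Finset.prod_le_one
        (fun k _ => Real.rpow_nonneg (by linarith [(hν (σ k)).2]) _)
        (fun k _ => Real.rpow_le_one (by linarith [(hν (σ k)).2])
          (by linarith [(hν (σ k)).1]) (hwnn k))
  have h2 : (1 - ∏ k, (1 - ν (σ k)) ^ (w k)) ∈ Set.Icc (0:ℝ) 1 := by
    constructor <;> [linarith [h2'.2]; linarith [h2'.1]]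
  have h3 : (∏ k, (μ (σ k)) ^ (w k)) ≤ ∏ k, (1 - ν (σ k)) ^ (w k) := by
    apply Finset.prod_le_prod
    · exact fun k _ => Real.rpow_nonneg (hμ (σ k)).1 _
    · exact fun k _ => Real.rpow_le_rpow (hμ (σ k)).1
        (by linarith [hμν (σ k)]) (hwnn k)
  refine ⟨h1, h2, by linarith, ?_⟩
  constructor
  · exact Finset.prod_nonneg fun k _ => Real.rpow_nonneg (hr (σ k)).1 _
  · have : (∏ k, (r (σ k)) ^ (w k)) ≤ ∏ k, (Real.sqrt 2) ^ (w k) := by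
      apply Finset.prod_le_prod
      · exact fun k _ => Real.rpow_nonneg (hr (σ k)).1 _
      · exact fun k _ => Real.rpow_le_rpow (hr (σ k)).1 (hr (σ k)).2 (hwnn k)
    have h2pos : (0:ℝ) < Real.sqrt 2 := Real.sqrt_pos.mpr (by norm_num)
    calc (∏ k, (r (σ k)) ^ (w k)) ≤ ∏ k, (Real.sqrt 2) ^ (w k) := this
      _ = (Real.sqrt 2) ^ (∑ k, w k) := (Real.rpow_sum_of_pos h2pos w Finset.univ).symm
      _ = Real.sqrt 2 := by rw [hsum, Real.rpow_one]
end

section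
/- Let τ be a fuzzy measure on X = {1,…,m}, let θ_1, …, θ_m be D-IFVs, let σ be a permutation of {1,…,m}, and set F_k := {σ(k),…,σ(m)} for k = 1,…,m, F_{m+1} := ∅, and w_k := τ(F_k) − τ(F_{k+1}). Then the disc intuitionistic fuzzy Choquet geometric integral D-IFCGIO_p^τ(θ_1,…,θ_m) := ⟨(∏_{k=1}^m μ_{θ_{σ(k)}}^{w_k}, 1 − ∏_{k=1}^m (1−ν_{θ_{σ(k)}})^{w_k}); √2 − ∏_{k=1}^m (√2 − r_{θ_{σ(k)}})^{w_k}⟩ is a D-IFV; explicitly, its first two components lie in [0,1], their sum is at most 1, and √2 − ∏_{k=1}^m (√2 − r_{θ_{σ(k)}})^{w_k} ∈ [0,√2]. -/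
open Finset

/-- the disc intuitionistic fuzzy Choquet geometric integral
D-IFCGIO_p^τ of D-IFVs θ_1,…,θ_m is a D-IFV.  Here X = Fin m (0-based), σ is a
permutation, F k = {σ(k), σ(k+1), …} (so F m = ∅), and the Choquet weights are
w k = τ(F k) − τ(F (k+1)).  Real powers `x ^ w` are `Real.rpow`. -/
theorem dIFCGIO_p_isDIFV (m : ℕ) (τ : Finset (Fin m) → ℝ)
    (hrange : ∀ A, τ A ∈ Set.Icc (0:ℝ) 1)
    (hempty : τ ∅ = 0) (huniv : τ Finset.univ = 1)
    (hmono : ∀ A B : Finset (Fin m), A ⊆ B → τ A ≤ τ B)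
    (μ ν r : Fin m → ℝ)
    (hμ : ∀ k, μ k ∈ Set.Icc (0:ℝ) 1) (hν : ∀ k, ν k ∈ Set.Icc (0:ℝ) 1)
    (hμν : ∀ k, μ k + ν k ≤ 1) (hr : ∀ k, r k ∈ Set.Icc (0:ℝ) (Real.sqrt 2))
    (σ : Equiv.Perm (Fin m)) (F : ℕ → Finset (Fin m))
    (hF : ∀ n, F n = (Finset.univ.filter (fun j : Fin m => n ≤ j.val)).image σ)
    (w : Fin m → ℝ) (hw : ∀ k : Fin m, w k = τ (F k.val) - τ (F (k.val + 1))) :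
    (∏ k, (μ (σ k)) ^ (w k)) ∈ Set.Icc (0:ℝ) 1 ∧
    (1 - ∏ k, (1 - ν (σ k)) ^ (w k)) ∈ Set.Icc (0:ℝ) 1 ∧
    (∏ k, (μ (σ k)) ^ (w k)) + (1 - ∏ k, (1 - ν (σ k)) ^ (w k)) ≤ 1 ∧
    (Real.sqrt 2 - ∏ k, (Real.sqrt 2 - r (σ k)) ^ (w k))
      ∈ Set.Icc (0:ℝ) (Real.sqrt 2) := by
  -- weights are nonnegative
  have hw0 : ∀ k : Fin m, 0 ≤ w k := by
    intro k
    rw [hw k]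
    have hsub : F (k.val + 1) ⊆ F k.val := by
      rw [hF, hF]
      apply Finset.image_subset_image
      intro j hj
      simp only [Finset.mem_filter, Finset.mem_univ, true_and] at hj ⊢
      omega
    linarith [hmono _ _ hsub]
  -- sum of weights is 1
  have hF0 : F 0 = Finset.univ := by
    rw [hF]
    ext x
    simp only [Finset.mem_image, Finset.mem_filter, Finset.mem_univ, true_and]
    exact ⟨fun _ => trivial, fun _ => ⟨σ.symm x, Nat.zero_le _, by simp⟩⟩
  have hFm : F m = ∅ := by
    rw [hF]
    ext x
    simp only [Finset.mem_image, Finset.mem_filter, Finset.mem_univ, true_and,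
      Finset.notMem_empty, iff_false]
    rintro ⟨j, hj, -⟩
    exact absurd hj (by omega)
  have hsum : ∑ k, w k = 1 := by
    have h1 : ∑ k, w k = ∑ k : Fin m, (τ (F k.val) - τ (F (k.val + 1))) :=
      Finset.sum_congr rfl (fun k _ => hw k)
    rw [h1, Fin.sum_univ_eq_sum_range (fun i => τ (F i) - τ (F (i + 1))), Finset.sum_range_sub' (fun n => τ (F n)), hF0, hFm, huniv, hempty]
    ring
  -- generic product bounds
  have prodIcc : ∀ f : Fin m → ℝ, (∀ k, f k ∈ Set.Icc (0:ℝ) 1) →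
      (∏ k, (f (σ k)) ^ (w k)) ∈ Set.Icc (0:ℝ) 1 := by
    intro f hf
    constructor
    · exact Finset.prod_nonneg fun k _ => Real.rpow_nonneg (hf (σ k)).1 _
    · exact Finset.prod_le_one (fun k _ => Real.rpow_nonneg (hf (σ k)).1 _)
        (fun k _ => Real.rpow_le_one (hf (σ k)).1 (hf (σ k)).2 (hw0 k))
  have hμprod := prodIcc μ hμ
  have hνprod := prodIcc (fun k => 1 - ν k) (fun k => ⟨by linarith [(hν k).2],
    by linarith [(hν k).1]⟩)
  have hsumle : (∏ k, (μ (σ k)) ^ (w k)) ≤ ∏ k, (1 - ν (σ k)) ^ (w k) := by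
    apply Finset.prod_le_prod
    · intro k _; exact Real.rpow_nonneg (hμ (σ k)).1 _
    · intro k _
      exact Real.rpow_le_rpow (hμ (σ k)).1 (by linarith [hμν (σ k)]) (hw0 k)
  refine ⟨hμprod, ⟨by linarith [hνprod.2], by linarith [hνprod.1]⟩,
    by linarith, ?_, ?_⟩
  · have h2 : (0:ℝ) < Real.sqrt 2 := by positivity
    have hle : (∏ k, (Real.sqrt 2 - r (σ k)) ^ (w k)) ≤ Real.sqrt 2 := by
      calc ∏ k, (Real.sqrt 2 - r (σ k)) ^ (w k)
          ≤ ∏ k, (Real.sqrt 2) ^ (w k) := by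
            apply Finset.prod_le_prod
            · intro k _; exact Real.rpow_nonneg (by linarith [(hr (σ k)).2]) _
            · intro k _
              exact Real.rpow_le_rpow (by linarith [(hr (σ k)).2])
                (by linarith [(hr (σ k)).1]) (hw0 k)
        _ = (Real.sqrt 2) ^ (∑ k, w k) := (Real.rpow_sum_of_pos h2 w _).symm
        _ = Real.sqrt 2 := by rw [hsum, Real.rpow_one]
    linarith
  · have : (0:ℝ) ≤ ∏ k, (Real.sqrt 2 - r (σ k)) ^ (w k) :=
      Finset.prod_nonneg fun k _ =>
        Real.rpow_nonneg (by linarith [(hr (σ k)).2]) _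
    linarith
end
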